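/- Let ũ^n = (4/3)u^n − (1/3)u^{n−1} and suppose y^n ∈ X satisfies (2/(3δt))(3y^n − 4u^n + u^{n−1}) + M(y^n − ũ^n) + h(y^n) + 2f(u^n) − f(u^{n−1}) = 0, with δt < 2/(3L), d^n = y^n − u^n ≠ 0, and ∇E^n continuous. Then for every α ∈ (0, 2/(3δt) − L) there exists λ̄ > 0 such that for all λ_n ∈ (0, λ̄], E^n(y^n + λ_n d^n) − E^n(y^n) ≤ −(5λ_n/6)‖d^n‖_M² + (λ_n/6)‖u^n − u^{n−1}‖_M² − α λ_n ‖d^n‖². -/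

import Mathlib

open scoped RealInnerProductSpace Topology

/-- Line-search estimate in the extrapolated case `ûⁿ = ũⁿ`. -/
theorem line_search_estimate_util
    {X : Type*} [NormedAddCommGroup X] [InnerProductSpace ℝ X] [FiniteDimensional ℝ X]
    (H : X → ℝ) (h : X → X) (hH : ∀ x : X, HasGradientAt H (h x) x)
    (hHconv : ConvexOn ℝ Set.univ H)
    (F : X → ℝ) (f : X → X) (hF : ∀ x : X, HasGradientAt F (f x) x)
    (L : ℝ) (hL : 0 < L) (hLip : ∀ x y : X, ‖f x - f y‖ ≤ L * ‖x - y‖)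
    (δt : ℝ) (hδt : 0 < δt) (hδt2 : δt < 2 / (3 * L))
    (M : X →L[ℝ] X) (hMsym : ∀ x y : X, ⟪M x, y⟫ = ⟪x, M y⟫)
    (hMpsd : ∀ x : X, 0 ≤ ⟪M x, x⟫)
    (un unm1 : X)
    (Hn Fn En : X → ℝ)
    (hHn : ∀ u : X, Hn u = H u + (1 / δt) * ‖u - un‖ ^ 2)
    (hFn : ∀ u : X, Fn u = (1 / (3 * δt)) * ‖u - unm1‖ ^ 2 - F u
      - ⟪f un - f unm1, u - unm1⟫)
    (hEn : ∀ u : X, En u = Hn u - Fn u)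
    (util : X) (hutil : util = (4 / 3 : ℝ) • un - (1 / 3 : ℝ) • unm1)
    (yn : X)
    (hopt : (2 / (3 * δt)) • ((3 : ℝ) • yn - (4 : ℝ) • un + unm1) + M (yn - util)
      + h yn + (2 : ℝ) • f un - f unm1 = 0)
    (hd : yn - un ≠ 0) (hEcont : Continuous (gradient En)) :
    ∀ α : ℝ, 0 < α → α < 2 / (3 * δt) - L →
      ∃ lamBar : ℝ, 0 < lamBar ∧ ∀ lam : ℝ, 0 < lam → lam ≤ lamBar →
        En (yn + lam • (yn - un)) - En yn
          ≤ -(5 * lam / 6) * ⟪M (yn - un), yn - un⟫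
            + (lam / 6) * ⟪M (un - unm1), un - unm1⟫ - α * lam * ‖yn - un‖ ^ 2 := by
  intro α hα hα2
  have hnd : 0 < ‖yn - un‖ := norm_pos_iff.mpr hd
  -- abbreviations (as plain terms)
  set B : ℝ := (2 / δt) * ⟪yn - un, yn - un⟫ - (2 / (3 * δt)) * ⟪yn - unm1, yn - un⟫
      + ⟪f un - f unm1, yn - un⟫ with hB
  set A : ℝ := (1 / δt) * ‖yn - un‖ ^ 2 - (1 / (3 * δt)) * ‖yn - unm1‖ ^ 2
      + ⟪f un - f unm1, yn - unm1⟫ with hA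
  set Cq : ℝ := (1 / δt - 1 / (3 * δt)) * ‖yn - un‖ ^ 2 with hCq
  -- quadratic expansion of the norm terms along the line
  have hq : ∀ (a : X) (lam : ℝ), ‖yn + lam • (yn - un) - a‖ ^ 2
      = ‖yn - a‖ ^ 2 + 2 * lam * ⟪yn - a, yn - un⟫ + lam ^ 2 * ‖yn - un‖ ^ 2 := by
    intro a lam
    rw [add_sub_right_comm, norm_add_sq_real, real_inner_smul_right, norm_smul]
    simp [mul_pow, sq_abs]
    ring
  have hlin : ∀ lam : ℝ, ⟪f un - f unm1, yn + lam • (yn - un) - unm1⟫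
      = ⟪f un - f unm1, yn - unm1⟫ + lam * ⟪f un - f unm1, yn - un⟫ := by
    intro lam
    rw [add_sub_right_comm, inner_add_right, real_inner_smul_right]
  have hexp : ∀ lam : ℝ, En (yn + lam • (yn - un))
      = H (yn + lam • (yn - un)) + F (yn + lam • (yn - un)) + (A + B * lam + Cq * lam ^ 2) := by
    intro lam
    rw [hEn, hHn, hFn, hq, hq, hlin, hA, hB, hCq]
    ring
  -- derivative of the line map
  have hline : HasDerivAt (fun lam : ℝ => yn + lam • (yn - un)) (yn - un) 0 := by
    simpa using ((hasDerivAt_id (0 : ℝ)).smul_const (yn - un)).const_add yn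
  have h0 : yn + (0 : ℝ) • (yn - un) = yn := by simp
  have hHd : HasDerivAt (fun lam : ℝ => H (yn + lam • (yn - un))) ⟪h yn, yn - un⟫ 0 := by
    have hHy := (hH yn).hasFDerivAt
    rw [← h0] at hHy
    have := hHy.comp_hasDerivAt 0 hline
    simpa [Function.comp_def, InnerProductSpace.toDual_apply_apply] using this
  have hFd : HasDerivAt (fun lam : ℝ => F (yn + lam • (yn - un))) ⟪f yn, yn - un⟫ 0 := by
    have hFy := (hF yn).hasFDerivAt
    rw [← h0] at hFy
    have := hFy.comp_hasDerivAt 0 hline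
    simpa [Function.comp_def, InnerProductSpace.toDual_apply_apply] using this
  have hpolyd : HasDerivAt (fun lam : ℝ => A + B * lam + Cq * lam ^ 2) B 0 := by
    have h1 : HasDerivAt (fun lam : ℝ => B * lam) B 0 := by
      simpa using (hasDerivAt_id (0 : ℝ)).const_mul B
    have h2 : HasDerivAt (fun lam : ℝ => Cq * lam ^ 2) 0 0 := by
      simpa using (hasDerivAt_pow 2 (0 : ℝ)).const_mul Cq
    simpa [Pi.add_def] using (h1.const_add A).add h2
  set D : ℝ := ⟪h yn, yn - un⟫ + ⟪f yn, yn - un⟫ + B with hD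
  have hφ : HasDerivAt (fun lam : ℝ => En (yn + lam • (yn - un))) D 0 := by
    rw [show (fun lam : ℝ => En (yn + lam • (yn - un)))
        = fun lam : ℝ => H (yn + lam • (yn - un)) + F (yn + lam • (yn - un))
          + (A + B * lam + Cq * lam ^ 2) from funext hexp]
    exact (hHd.add hFd).add hpolyd
  -- key identity from optimality
  have key : ⟪(2 / (3 * δt)) • ((3 : ℝ) • yn - (4 : ℝ) • un + unm1) + M (yn - util)
      + h yn + (2 : ℝ) • f un - f unm1, yn - un⟫ = (0 : ℝ) := by
    rw [hopt]; exact inner_zero_left _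
  simp only [map_sub, inner_add_left, inner_sub_left, real_inner_smul_left] at key
  have hDeq : D = ⟪f yn, yn - un⟫ - ⟪f un, yn - un⟫ - ⟪M (yn - util), yn - un⟫
      - (2 / (3 * δt)) * ⟪yn - un, yn - un⟫ := by
    rw [hD, hB]
    simp only [map_sub, inner_sub_left]
    linear_combination key
  -- M terms
  have hv : yn - util = (yn - un) - (1 / 3 : ℝ) • (un - unm1) := by
    rw [hutil]; module
  have hMd : ⟪M (yn - util), yn - un⟫
      = ⟪M (yn - un), yn - un⟫ - (1 / 3) * ⟪M (un - unm1), yn - un⟫ := by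
    rw [hv, map_sub, map_smul, inner_sub_left, real_inner_smul_left]
  have hsym : ⟪M (yn - un), un - unm1⟫ = ⟪M (un - unm1), yn - un⟫ := by
    rw [hMsym]; exact real_inner_comm _ _
  have hpsd : 0 ≤ ⟪M (yn - un), yn - un⟫ - 2 * ⟪M (un - unm1), yn - un⟫
      + ⟪M (un - unm1), un - unm1⟫ := by
    have habs : ∀ v w : X, 0 ≤ ⟪M v, v⟫ - 2 * ⟪M w, v⟫ + ⟪M w, w⟫ := by
      intro v w
      have h2 := hMpsd (v - w)
      have hs : ⟪M v, w⟫ = ⟪M w, v⟫ := by rw [hMsym]; exact real_inner_comm _ _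
      have hexp2 : ⟪M (v - w), v - w⟫
          = ⟪M v, v⟫ - ⟪M v, w⟫ - ⟪M w, v⟫ + ⟪M w, w⟫ := by
        rw [map_sub, inner_sub_left, inner_sub_right, inner_sub_right]; ring
      rw [hexp2, hs] at h2
      linarith
    exact habs (yn - un) (un - unm1)
  have hlipb : ⟪f yn - f un, yn - un⟫ ≤ L * ‖yn - un‖ ^ 2 := by
    calc ⟪f yn - f un, yn - un⟫ ≤ ‖f yn - f un‖ * ‖yn - un‖ := real_inner_le_norm _ _
      _ ≤ (L * ‖yn - un‖) * ‖yn - un‖ :=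
        mul_le_mul_of_nonneg_right (hLip yn un) (norm_nonneg _)
      _ = L * ‖yn - un‖ ^ 2 := by ring
  rw [inner_sub_left] at hlipb
  have hip : ⟪yn - un, yn - un⟫ = ‖yn - un‖ ^ 2 := real_inner_self_eq_norm_sq _
  set Cc : ℝ := -(5 / 6) * ⟪M (yn - un), yn - un⟫ + (1 / 6) * ⟪M (un - unm1), un - unm1⟫
      - α * ‖yn - un‖ ^ 2 with hCc
  have hslack : (L - 2 / (3 * δt)) * ‖yn - un‖ ^ 2 < -α * ‖yn - un‖ ^ 2 :=
    mul_lt_mul_of_pos_right (by linarith) (pow_pos hnd 2)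
  have hDlt : D < Cc := by
    rw [hCc]
    rw [hip] at hDeq
    linarith [hDeq, hMd, hpsd, hsym, hlipb, hslack]
  -- pass to the slope
  have hslope := hasDerivAt_iff_tendsto_slope.mp hφ
  have hmem : {lam : ℝ | slope (fun t : ℝ => En (yn + t • (yn - un))) 0 lam < Cc}
      ∈ 𝓝[>] (0 : ℝ) := by
    have h1 : {lam : ℝ | slope (fun t : ℝ => En (yn + t • (yn - un))) 0 lam < Cc}
        ∈ 𝓝[≠] (0 : ℝ) := hslope (Iio_mem_nhds hDlt)
    exact nhdsWithin_mono 0 (fun x hx => ne_of_gt hx) h1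
  obtain ⟨lamBar, hlamBar, hsub⟩ := mem_nhdsGT_iff_exists_Ioc_subset.mp hmem
  refine ⟨lamBar, hlamBar, fun lam hlam hle => ?_⟩
  have hs := hsub ⟨hlam, hle⟩
  simp only [Set.mem_setOf_eq, slope_def_field, h0, sub_zero] at hs
  have hlt : En (yn + lam • (yn - un)) - En yn < Cc * lam := by
    rw [div_lt_iff₀ hlam] at hs
    exact hs
  calc En (yn + lam • (yn - un)) - En yn ≤ Cc * lam := le_of_lt hlt
    _ = -(5 * lam / 6) * ⟪M (yn - un), yn - un⟫
        + (lam / 6) * ⟪M (un - unm1), un - unm1⟫ - α * lam * ‖yn - un‖ ^ 2 := by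
      rw [hCc]; ring
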